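/- Let G = (V, E) be a graph containing a maximal independent set I such that for some real α ≥ 1, with R := V \ I: (1) every vertex of I has degree at most α in G, and (2) every vertex v ∈ R satisfies d(v) ≥ α + (d_R(v) + 1)/2, where d_R(v) is the number of neighbours of v in R. Then G admits an edge weighting ω : E → {1,2,3} under which adjacent vertices have distinct weighted degrees. -/

import Mathlib

open Classical in
/-- Degree of `v` in `G` (classical, so usable for arbitrary subgraphs). -/
noncomputable def deg {V : Type*} [Fintype V] (G : SimpleGraph V) (v : V) : ℕ :=
  G.degree v

open Classical in
/-- Weighted degree (sum) of `v` under edge weighting `w`. -/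
noncomputable def wdeg {V : Type*} [Fintype V] (G : SimpleGraph V) (w : Sym2 V → ℕ) (v : V) : ℕ :=
  ∑ e ∈ G.incidenceFinset v, w e

/-- `G` has no `K₂`-component: every edge is adjacent to some other edge. -/
def NoIsolatedEdge {V : Type*} (G : SimpleGraph V) : Prop :=
  ∀ u v, G.Adj u v → ∃ x, (G.Adj u x ∧ x ≠ v) ∨ (G.Adj v x ∧ x ≠ u)

/-- `G` admits a neighbour-sum-distinguishing edge weighting with weights in {1,2,3}. -/
def Fulfills123 {V : Type*} [Fintype V] (G : SimpleGraph V) : Prop :=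
  ∃ w : Sym2 V → ℕ, (∀ e ∈ G.edgeSet, w e = 1 ∨ w e = 2 ∨ w e = 3) ∧
    ∀ u v, G.Adj u v → wdeg G w u ≠ wdeg G w v

set_option linter.unusedSectionVars false

namespace Stmt11Aux
variable {V : Type*} [Fintype V]

open Classical in
lemma deg_nbr (G : SimpleGraph V) (v : V) : deg G v = (G.neighborFinset v).card := by
  classical
  rw [deg]
  show (SimpleGraph.neighborFinset G v).card = _
  congr 1


open Classical in
lemma wdeg_nbr (G : SimpleGraph V) (w : Sym2 V → ℕ) (v : V) :
    wdeg G w v = ∑ x ∈ G.neighborFinset v, w s(v, x) := by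
  classical
  rw [wdeg]
  rw [show G.incidenceFinset v = (G.neighborFinset v).image (fun x => s(v, x)) from ?_]
  · rw [Finset.sum_image]
    intro a _ b _ hab
    exact Sym2.congr_right.mp hab
  · ext e
    simp only [SimpleGraph.mem_incidenceFinset, Finset.mem_image, SimpleGraph.mem_neighborFinset]
    constructor
    · rintro ⟨he, hv⟩
      induction e with
      | h a b =>
        rw [SimpleGraph.mem_edgeSet] at he
        rcases Sym2.mem_iff.mp hv with rfl | rfl
        · exact ⟨b, he, rfl⟩
        · exact ⟨a, he.symm, Sym2.eq_swap⟩
    · rintro ⟨x, hx, rfl⟩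
      exact ⟨(SimpleGraph.mem_edgeSet G).mpr hx, Sym2.mem_mk_left _ _⟩

lemma sum_swap_two {s : Finset V} (g g' : V → ℕ) {a b : V}
    (ha : a ∈ s) (hb : b ∈ s) (hab : a ≠ b)
    (hrest : ∀ x ∈ s, x ≠ a → x ≠ b → g' x = g x)
    (hsum : g' a + g' b = g a + g b) :
    ∑ x ∈ s, g' x = ∑ x ∈ s, g x := by
  classical
  have hsub : ({a, b} : Finset V) ⊆ s := by
    intro x hx
    rcases Finset.mem_insert.mp hx with rfl | hx
    · exact ha
    · rw [Finset.mem_singleton] at hx; subst hx; exact hb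
  have h1 := Finset.sum_sdiff (f := g') hsub
  have h2 := Finset.sum_sdiff (f := g) hsub
  have hdiff : ∑ x ∈ s \ {a, b}, g' x = ∑ x ∈ s \ {a, b}, g x := by
    refine Finset.sum_congr rfl (fun x hx => ?_)
    rw [Finset.mem_sdiff, Finset.mem_insert, Finset.mem_singleton] at hx
    exact hrest x hx.1 (fun h => hx.2 (Or.inl h)) (fun h => hx.2 (Or.inr h))
  have hp1 : ∑ x ∈ ({a, b} : Finset V), g' x = g' a + g' b := Finset.sum_pair hab
  have hp2 : ∑ x ∈ ({a, b} : Finset V), g x = g a + g b := Finset.sum_pair hab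
  omega

structure Inv (G : SimpleGraph V) (I : Set V) (α : ℝ) (P : Finset V) (w : Sym2 V → ℕ) : Prop where
  iw : ∀ a b, G.Adj a b → a ∈ I → w s(a, b) = 1 ∨ w s(a, b) = 2
  rr : ∀ a b, G.Adj a b → w s(a, b) = 1 ∨ w s(a, b) = 2 ∨ w s(a, b) = 3
  rr2 : ∀ a b, G.Adj a b → a ∉ I → b ∉ I → (a ∉ P ∨ b ∉ P) → w s(a, b) = 2
  big : ∀ v ∈ P, 2 * α < (wdeg G w v : ℝ)
  dis : ∀ v ∈ P, ∀ v' ∈ P, G.Adj v v' → wdeg G w v ≠ wdeg G w v'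

set_option maxHeartbeats 1000000 in
open Classical in
lemma step (G : SimpleGraph V) (I : Set V) (α : ℝ)
    (hα : 1 ≤ α)
    (hmax : ∀ v ∉ I, ∃ u ∈ I, G.Adj v u)
    (h2 : ∀ v ∉ I, α + (((G.neighborSet v ∩ Iᶜ).ncard : ℝ) + 1) / 2 ≤ (deg G v : ℝ))
    (P : Finset V) (hP : ∀ x ∈ P, x ∉ I)
    (v : V) (hvI : v ∉ I) (hvP : v ∉ P)
    (w : Sym2 V → ℕ) (hw : Inv G I α P w) :
    ∃ w', Inv G I α (insert v P) w' := by
  classical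
  set N : Finset V := G.neighborFinset v with hN
  set K : Finset V := N.filter (fun x => x ∈ I) with hKdef
  set NRv : Finset V := N.filter (fun x => x ∉ I) with hNRdef
  set B : Finset V := NRv.filter (fun x => x ∈ P) with hBdef
  set Fd : Finset V := NRv.filter (fun x => x ∉ P) with hFdef
  have hKmem : ∀ x, x ∈ K ↔ (G.Adj v x ∧ x ∈ I) := by
    intro x
    rw [hKdef, Finset.mem_filter, hN, SimpleGraph.mem_neighborFinset]
  have hNRmem : ∀ x, x ∈ NRv ↔ (G.Adj v x ∧ x ∉ I) := by
    intro x
    rw [hNRdef, Finset.mem_filter, hN, SimpleGraph.mem_neighborFinset]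
  have hBmem : ∀ x, x ∈ B ↔ (G.Adj v x ∧ x ∉ I ∧ x ∈ P) := by
    intro x
    rw [hBdef, Finset.mem_filter, hNRmem x, and_assoc]
  have hFdmem : ∀ x, x ∈ Fd ↔ (G.Adj v x ∧ x ∉ I ∧ x ∉ P) := by
    intro x
    rw [hFdef, Finset.mem_filter, hNRmem x, and_assoc]
  -- splitting sums over the neighborhood
  have hsplit1 : ∀ g : V → ℕ, ∑ x ∈ N, g x = ∑ x ∈ K, g x + ∑ x ∈ NRv, g x := by
    intro g; rw [hKdef, hNRdef]; exact (Finset.sum_filter_add_sum_filter_not N _ g).symm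
  have hsplit2 : ∀ g : V → ℕ, ∑ x ∈ NRv, g x = ∑ x ∈ B, g x + ∑ x ∈ Fd, g x := by
    intro g; rw [hBdef, hFdef]; exact (Finset.sum_filter_add_sum_filter_not NRv _ g).symm
  have hcard1 : N.card = K.card + NRv.card := by
    rw [Finset.card_eq_sum_ones N, Finset.card_eq_sum_ones K, Finset.card_eq_sum_ones NRv]
    exact hsplit1 _
  have hcard2 : NRv.card = B.card + Fd.card := by
    rw [Finset.card_eq_sum_ones NRv, Finset.card_eq_sum_ones B, Finset.card_eq_sum_ones Fd]
    exact hsplit2 _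
  have hdegv : deg G v = K.card + NRv.card := by rw [deg_nbr, ← hN]; exact hcard1
  have hncard : (G.neighborSet v ∩ Iᶜ).ncard = NRv.card := by
    have hset : (G.neighborSet v ∩ Iᶜ) = (↑NRv : Set V) := by
      ext x
      simp only [Set.mem_inter_iff, SimpleGraph.mem_neighborSet, Set.mem_compl_iff,
        Finset.coe_filter, hNRdef]
      constructor
      · rintro ⟨h1, h2⟩
        exact ⟨(SimpleGraph.mem_neighborFinset G v x).mpr h1, h2⟩
      · rintro ⟨h1, h2⟩
        exact ⟨(SimpleGraph.mem_neighborFinset G v x).mp h1, h2⟩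
    rw [hset, Set.ncard_coe_finset]
  have key : 2*α + 1 ≤ 2*(K.card:ℝ) + NRv.card := by
    have h := h2 v hvI
    rw [hncard] at h
    rw [hdegv] at h
    push_cast at h
    linarith
  have hKne : 1 ≤ K.card := by
    obtain ⟨u, huI, huadj⟩ := hmax v hvI
    exact Finset.card_pos.mpr ⟨u, (hKmem u).mpr ⟨huadj, huI⟩⟩
  -- the split of B into "can go up" and "must go down"
  set Bp : Finset V := B.filter (fun x => ∃ u, u ∈ I ∧ G.Adj x u ∧ w s(x, u) = 2) with hBpdef
  have hBpB : Bp ⊆ B := Finset.filter_subset _ _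
  set Bm : Finset V := B \ Bp with hBmdef
  have hBmB : Bm ⊆ B := Finset.sdiff_subset
  have hpm : Bp.card + Bm.card = B.card := by
    rw [hBmdef]
    have := Finset.card_sdiff_add_card_eq_card hBpB
    omega
  -- compensation choice
  have hcp0 : ∀ x : V, ∃ u : V,
      x ∈ B → (u ∈ I ∧ G.Adj x u ∧ w s(x, u) = (if x ∈ Bp then 2 else 1)) := by
    intro x
    by_cases hx : x ∈ B
    · by_cases hx2 : x ∈ Bp
      · obtain ⟨u, huI, huadj, hu2⟩ := (Finset.mem_filter.mp hx2).2
        exact ⟨u, fun _ => ⟨huI, huadj, by rw [if_pos hx2]; exact hu2⟩⟩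
      · obtain ⟨u, huI, huadj⟩ := hmax x ((hBmem x).mp hx).2.1
        have h12 : w s(u, x) = 1 ∨ w s(u, x) = 2 := hw.iw u x huadj.symm huI
        rw [Sym2.eq_swap] at h12
        have hne2 : w s(x, u) ≠ 2 := fun h2' =>
          hx2 (Finset.mem_filter.mpr ⟨hx, ⟨u, huI, huadj, h2'⟩⟩)
        rcases h12 with h1 | h2'
        · exact ⟨u, fun _ => ⟨huI, huadj, by rw [if_neg hx2]; exact h1⟩⟩
        · exact absurd h2' hne2
    · exact ⟨v, fun h => absurd h hx⟩
  choose cp hcp using hcp0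
  -- choice of the target value t
  set A : ℕ := ⌊2*α⌋₊ with hAdef
  set U : ℕ := 2*B.card + 2*Fd.card + 2*K.card + Bp.card with hUdef
  set L : ℕ := max (A+1) (2*B.card + 2*Fd.card + K.card - Bm.card) with hLdef
  have hAle : (A:ℝ) ≤ 2*α := Nat.floor_le (by linarith)
  have hune : A + 1 ≤ 2*K.card + NRv.card := by
    have : ((A:ℕ):ℝ) + 1 ≤ 2*(K.card:ℝ) + (NRv.card:ℝ) := by linarith
    exact_mod_cast this
  have hLU : L + B.card < U + 1 := by omega
  set Fbd : Finset ℕ := B.image (wdeg G w) with hFbddef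
  have hFbdcard : Fbd.card ≤ B.card := Finset.card_image_le
  have hex : ∃ t, t ∈ Finset.Icc L U ∧ t ∉ Fbd := by
    by_contra hcon
    push_neg at hcon
    have hsub : Finset.Icc L U ⊆ Fbd := fun t ht => hcon t ht
    have hcc := Finset.card_le_card hsub
    rw [Nat.card_Icc] at hcc
    omega
  obtain ⟨t, htIcc, htFbd⟩ := hex
  obtain ⟨htL, htU⟩ := Finset.mem_Icc.mp htIcc
  have htA : A + 1 ≤ t := le_trans (le_max_left _ _) htL
  have htreal : 2*α < (t:ℝ) := by
    have h1 : 2*α < (A:ℝ) + 1 := Nat.lt_floor_add_one _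
    have h2' : ((A:ℕ):ℝ) + 1 ≤ (t:ℝ) := by exact_mod_cast htA
    linarith
  -- realization data
  have hSTc : ∃ (S T : Finset V) (c : ℕ), S ⊆ Bp ∧ T ⊆ Bm ∧ K.card ≤ c ∧ c ≤ 2*K.card ∧
      t + T.card = 2*B.card + 2*Fd.card + S.card + c := by
    by_cases hcase1 : 2*B.card + 2*Fd.card + 2*K.card ≤ t
    · obtain ⟨S, hS, hScard⟩ :=
        Finset.exists_subset_card_eq (s := Bp) (n := t - (2*B.card + 2*Fd.card + 2*K.card)) (by omega)
      refine ⟨S, ∅, 2*K.card, hS, Finset.empty_subset _, by omega, le_refl _, ?_⟩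
      rw [hScard]; simp; omega
    · by_cases hcase2 : 2*B.card + 2*Fd.card + K.card ≤ t
      · refine ⟨∅, ∅, t - (2*B.card + 2*Fd.card), Finset.empty_subset _, Finset.empty_subset _,
          by omega, by omega, ?_⟩
        simp; omega
      · obtain ⟨T, hT, hTcard⟩ :=
          Finset.exists_subset_card_eq (s := Bm) (n := 2*B.card + 2*Fd.card + K.card - t) (by omega)
        refine ⟨∅, T, K.card, Finset.empty_subset _, hT, le_refl _, by omega, ?_⟩
        rw [hTcard]; simp; omega
  obtain ⟨S, T, c, hSBp, hTBm, hcK1, hcK2, htform⟩ := hSTc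
  obtain ⟨Kc, hKcK, hKccard⟩ := Finset.exists_subset_card_eq (s := K) (n := c - K.card) (by omega)

  -- basic facts about the chosen sets
  have hBP : ∀ x ∈ B, x ∈ P := fun x hx => ((hBmem x).mp hx).2.2
  have hBI : ∀ x ∈ B, x ∉ I := fun x hx => ((hBmem x).mp hx).2.1
  have hBadj : ∀ x ∈ B, G.Adj v x := fun x hx => ((hBmem x).mp hx).1
  have hKI : ∀ u ∈ K, u ∈ I := fun u hu => ((hKmem u).mp hu).2
  have hSB : S ⊆ B := hSBp.trans hBpB
  have hTB : T ⊆ B := hTBm.trans hBmB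
  have hSTdisj : ∀ x, x ∈ S → x ∈ T → False := by
    intro x hxS hxT
    exact (Finset.mem_sdiff.mp (hTBm hxT)).2 (hSBp hxS)
  have hcpI : ∀ x ∈ B, cp x ∈ I := fun x hx => (hcp x hx).1
  have hcpadj : ∀ x ∈ B, G.Adj x (cp x) := fun x hx => (hcp x hx).2.1
  have hcpS : ∀ x ∈ S, w s(x, cp x) = 2 := by
    intro x hx
    have := (hcp x (hSB hx)).2.2
    rwa [if_pos (hSBp hx)] at this
  have hcpT : ∀ x ∈ T, w s(x, cp x) = 1 := by
    intro x hx
    have := (hcp x (hTB hx)).2.2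
    rwa [if_neg (Finset.mem_sdiff.mp (hTBm hx)).2] at this
  -- the new weighting
  set w' : Sym2 V → ℕ := fun e =>
    if ∃ x ∈ S, e = s(v, x) then 3
    else if ∃ x ∈ T, e = s(v, x) then 1
    else if ∃ x ∈ S, e = s(x, cp x) then 1
    else if ∃ x ∈ T, e = s(x, cp x) then 2
    else if ∃ u ∈ Kc, e = s(v, u) then 2
    else if ∃ u ∈ K \ Kc, e = s(v, u) then 1
    else w e with hw'def
  -- evaluation lemmas
  have EvB : ∀ x ∈ B, w' s(v, x) = (if x ∈ S then 3 else if x ∈ T then 1 else w s(v, x)) := by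
    intro x hxB
    have hxI : x ∉ I := hBI x hxB
    simp only [hw'def]
    by_cases hxS : x ∈ S
    · rw [if_pos ⟨x, hxS, rfl⟩, if_pos hxS]
    · have hc1 : ¬ ∃ y ∈ S, s(v, x) = s(v, y) := by
        rintro ⟨y, hy, he⟩
        exact hxS ((Sym2.congr_right.mp he) ▸ hy)
      rw [if_neg hc1, if_neg hxS]
      have hc3 : ¬ ∃ y ∈ S, s(v, x) = s(y, cp y) := by
        rintro ⟨y, hy, he⟩
        rcases Sym2.eq_iff.mp he with ⟨h1, h2⟩ | ⟨h1, h2⟩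
        · exact hvP (h1 ▸ hBP y (hSB hy))
        · exact hvI (h1 ▸ hcpI y (hSB hy))
      have hc4 : ¬ ∃ y ∈ T, s(v, x) = s(y, cp y) := by
        rintro ⟨y, hy, he⟩
        rcases Sym2.eq_iff.mp he with ⟨h1, h2⟩ | ⟨h1, h2⟩
        · exact hvP (h1 ▸ hBP y (hTB hy))
        · exact hvI (h1 ▸ hcpI y (hTB hy))
      have hc5 : ¬ ∃ u ∈ Kc, s(v, x) = s(v, u) := by
        rintro ⟨u, hu, he⟩
        exact hxI ((Sym2.congr_right.mp he) ▸ hKI u (hKcK hu))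
      have hc6 : ¬ ∃ u ∈ K \ Kc, s(v, x) = s(v, u) := by
        rintro ⟨u, hu, he⟩
        exact hxI ((Sym2.congr_right.mp he) ▸ hKI u (Finset.mem_sdiff.mp hu).1)
      by_cases hxT : x ∈ T
      · rw [if_pos ⟨x, hxT, rfl⟩, if_pos hxT]
      · have hc2 : ¬ ∃ y ∈ T, s(v, x) = s(v, y) := by
          rintro ⟨y, hy, he⟩
          exact hxT ((Sym2.congr_right.mp he) ▸ hy)
        rw [if_neg hc2, if_neg hc3, if_neg hc4, if_neg hc5, if_neg hc6, if_neg hxT]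
  have EvK : ∀ u ∈ K, w' s(v, u) = (if u ∈ Kc then 2 else 1) := by
    intro u hu
    have huI : u ∈ I := hKI u hu
    simp only [hw'def]
    have hc1 : ¬ ∃ y ∈ S, s(v, u) = s(v, y) := by
      rintro ⟨y, hy, he⟩
      exact hBI y (hSB hy) ((Sym2.congr_right.mp he) ▸ huI)
    have hc2 : ¬ ∃ y ∈ T, s(v, u) = s(v, y) := by
      rintro ⟨y, hy, he⟩
      exact hBI y (hTB hy) ((Sym2.congr_right.mp he) ▸ huI)
    have hc3 : ¬ ∃ y ∈ S, s(v, u) = s(y, cp y) := by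
      rintro ⟨y, hy, he⟩
      rcases Sym2.eq_iff.mp he with ⟨h1, h2⟩ | ⟨h1, h2⟩
      · exact hvP (h1 ▸ hBP y (hSB hy))
      · exact hvI (h1 ▸ hcpI y (hSB hy))
    have hc4 : ¬ ∃ y ∈ T, s(v, u) = s(y, cp y) := by
      rintro ⟨y, hy, he⟩
      rcases Sym2.eq_iff.mp he with ⟨h1, h2⟩ | ⟨h1, h2⟩
      · exact hvP (h1 ▸ hBP y (hTB hy))
      · exact hvI (h1 ▸ hcpI y (hTB hy))
    rw [if_neg hc1, if_neg hc2, if_neg hc3, if_neg hc4]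
    by_cases huc : u ∈ Kc
    · rw [if_pos ⟨u, huc, rfl⟩, if_pos huc]
    · have hc5 : ¬ ∃ y ∈ Kc, s(v, u) = s(v, y) := by
        rintro ⟨y, hy, he⟩
        exact huc ((Sym2.congr_right.mp he) ▸ hy)
      rw [if_neg hc5, if_pos ⟨u, Finset.mem_sdiff.mpr ⟨hu, huc⟩, rfl⟩, if_neg huc]
  have EvFd : ∀ x ∈ Fd, w' s(v, x) = w s(v, x) := by
    intro x hxF
    obtain ⟨hxadj, hxI, hxP⟩ := (hFdmem x).mp hxF
    simp only [hw'def]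
    have hc1 : ¬ ∃ y ∈ S, s(v, x) = s(v, y) := by
      rintro ⟨y, hy, he⟩
      exact hxP ((Sym2.congr_right.mp he) ▸ hBP y (hSB hy))
    have hc2 : ¬ ∃ y ∈ T, s(v, x) = s(v, y) := by
      rintro ⟨y, hy, he⟩
      exact hxP ((Sym2.congr_right.mp he) ▸ hBP y (hTB hy))
    have hc3 : ¬ ∃ y ∈ S, s(v, x) = s(y, cp y) := by
      rintro ⟨y, hy, he⟩
      rcases Sym2.eq_iff.mp he with ⟨h1, h2⟩ | ⟨h1, h2⟩
      · exact hvP (h1 ▸ hBP y (hSB hy))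
      · exact hvI (h1 ▸ hcpI y (hSB hy))
    have hc4 : ¬ ∃ y ∈ T, s(v, x) = s(y, cp y) := by
      rintro ⟨y, hy, he⟩
      rcases Sym2.eq_iff.mp he with ⟨h1, h2⟩ | ⟨h1, h2⟩
      · exact hvP (h1 ▸ hBP y (hTB hy))
      · exact hvI (h1 ▸ hcpI y (hTB hy))
    have hc5 : ¬ ∃ u ∈ Kc, s(v, x) = s(v, u) := by
      rintro ⟨u, hu, he⟩
      exact hxI ((Sym2.congr_right.mp he) ▸ hKI u (hKcK hu))
    have hc6 : ¬ ∃ u ∈ K \ Kc, s(v, x) = s(v, u) := by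
      rintro ⟨u, hu, he⟩
      exact hxI ((Sym2.congr_right.mp he) ▸ hKI u (Finset.mem_sdiff.mp hu).1)
    rw [if_neg hc1, if_neg hc2, if_neg hc3, if_neg hc4, if_neg hc5, if_neg hc6]
  have Ecp : ∀ x, (x ∈ S ∨ x ∈ T) → w' s(x, cp x) = (if x ∈ S then 1 else 2) := by
    intro x hxST
    have hxB : x ∈ B := by rcases hxST with h | h; exacts [hSB h, hTB h]
    have hxI : x ∉ I := hBI x hxB
    simp only [hw'def]
    have hc1 : ¬ ∃ y ∈ S, s(x, cp x) = s(v, y) := by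
      rintro ⟨y, hy, he⟩
      rcases Sym2.eq_iff.mp he with ⟨h1, h2⟩ | ⟨h1, h2⟩
      · exact hvP (h1 ▸ hBP x hxB)
      · exact hvI (h2 ▸ hcpI x hxB)
    have hc2 : ¬ ∃ y ∈ T, s(x, cp x) = s(v, y) := by
      rintro ⟨y, hy, he⟩
      rcases Sym2.eq_iff.mp he with ⟨h1, h2⟩ | ⟨h1, h2⟩
      · exact hvP (h1 ▸ hBP x hxB)
      · exact hvI (h2 ▸ hcpI x hxB)
    rw [if_neg hc1, if_neg hc2]
    by_cases hxS : x ∈ S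
    · rw [if_pos ⟨x, hxS, rfl⟩, if_pos hxS]
    · have hxT : x ∈ T := by rcases hxST with h | h; exacts [absurd h hxS, h]
      have hc3 : ¬ ∃ y ∈ S, s(x, cp x) = s(y, cp y) := by
        rintro ⟨y, hy, he⟩
        rcases Sym2.eq_iff.mp he with ⟨h1, h2⟩ | ⟨h1, h2⟩
        · exact hxS (h1 ▸ hy)
        · exact hxI (h1 ▸ hcpI y (hSB hy))
      rw [if_neg hc3, if_pos ⟨x, hxT, rfl⟩, if_neg hxS]
  have Erest : ∀ z y, G.Adj z y → z ∈ P →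
      ((z ∈ S ∨ z ∈ T) → (y ≠ v ∧ y ≠ cp z)) → w' s(z, y) = w s(z, y) := by
    intro z y hadj hzP hzy
    have hzI : z ∉ I := hP z hzP
    have hzv : z ≠ v := fun h => hvP (h ▸ hzP)
    simp only [hw'def]
    have hc1 : ¬ ∃ x ∈ S, s(z, y) = s(v, x) := by
      rintro ⟨x, hx, he⟩
      rcases Sym2.eq_iff.mp he with ⟨h1, h2⟩ | ⟨h1, h2⟩
      · exact hzv h1
      · exact (hzy (Or.inl (h1 ▸ hx))).1 h2
    have hc2 : ¬ ∃ x ∈ T, s(z, y) = s(v, x) := by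
      rintro ⟨x, hx, he⟩
      rcases Sym2.eq_iff.mp he with ⟨h1, h2⟩ | ⟨h1, h2⟩
      · exact hzv h1
      · exact (hzy (Or.inr (h1 ▸ hx))).1 h2
    have hc3 : ¬ ∃ x ∈ S, s(z, y) = s(x, cp x) := by
      rintro ⟨x, hx, he⟩
      rcases Sym2.eq_iff.mp he with ⟨h1, h2⟩ | ⟨h1, h2⟩
      · exact (hzy (Or.inl (h1 ▸ hx))).2 (by rw [h1]; exact h2)
      · exact hzI (h1 ▸ hcpI x (hSB hx))
    have hc4 : ¬ ∃ x ∈ T, s(z, y) = s(x, cp x) := by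
      rintro ⟨x, hx, he⟩
      rcases Sym2.eq_iff.mp he with ⟨h1, h2⟩ | ⟨h1, h2⟩
      · exact (hzy (Or.inr (h1 ▸ hx))).2 (by rw [h1]; exact h2)
      · exact hzI (h1 ▸ hcpI x (hTB hx))
    have hc5 : ¬ ∃ u ∈ Kc, s(z, y) = s(v, u) := by
      rintro ⟨u, hu, he⟩
      rcases Sym2.eq_iff.mp he with ⟨h1, h2⟩ | ⟨h1, h2⟩
      · exact hzv h1
      · exact hzI (h1 ▸ hKI u (hKcK hu))
    have hc6 : ¬ ∃ u ∈ K \ Kc, s(z, y) = s(v, u) := by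
      rintro ⟨u, hu, he⟩
      rcases Sym2.eq_iff.mp he with ⟨h1, h2⟩ | ⟨h1, h2⟩
      · exact hzv h1
      · exact hzI (h1 ▸ hKI u (Finset.mem_sdiff.mp hu).1)
    rw [if_neg hc1, if_neg hc2, if_neg hc3, if_neg hc4, if_neg hc5, if_neg hc6]

  -- the degree sums of already-processed vertices are unchanged
  have SumS : ∀ x ∈ S, wdeg G w' x = wdeg G w x := by
    intro x hxS
    have hxB : x ∈ B := hSB hxS
    rw [wdeg_nbr, wdeg_nbr]
    refine sum_swap_two _ _ (a := v) (b := cp x) ?_ ?_ ?_ ?_ ?_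
    · rw [SimpleGraph.mem_neighborFinset]; exact (hBadj x hxB).symm
    · rw [SimpleGraph.mem_neighborFinset]; exact hcpadj x hxB
    · exact fun h => hvI (h ▸ hcpI x hxB)
    · intro y hy hyv hycp
      exact Erest x y ((SimpleGraph.mem_neighborFinset _ _ _).mp hy) (hBP x hxB)
        (fun _ => ⟨hyv, hycp⟩)
    · have h1 : w' s(x, v) = 3 := by rw [Sym2.eq_swap, EvB x hxB, if_pos hxS]
      have h2 : w' s(x, cp x) = 1 := by rw [Ecp x (Or.inl hxS), if_pos hxS]
      have h3 : w s(x, v) = 2 := by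
        rw [Sym2.eq_swap]
        exact hw.rr2 v x (hBadj x hxB) hvI (hBI x hxB) (Or.inl hvP)
      have h4 := hcpS x hxS
      omega
  have SumT : ∀ x ∈ T, wdeg G w' x = wdeg G w x := by
    intro x hxT
    have hxB : x ∈ B := hTB hxT
    have hxS : x ∉ S := fun h => hSTdisj x h hxT
    rw [wdeg_nbr, wdeg_nbr]
    refine sum_swap_two _ _ (a := v) (b := cp x) ?_ ?_ ?_ ?_ ?_
    · rw [SimpleGraph.mem_neighborFinset]; exact (hBadj x hxB).symm
    · rw [SimpleGraph.mem_neighborFinset]; exact hcpadj x hxB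
    · exact fun h => hvI (h ▸ hcpI x hxB)
    · intro y hy hyv hycp
      exact Erest x y ((SimpleGraph.mem_neighborFinset _ _ _).mp hy) (hBP x hxB)
        (fun _ => ⟨hyv, hycp⟩)
    · have h1 : w' s(x, v) = 1 := by rw [Sym2.eq_swap, EvB x hxB, if_neg hxS, if_pos hxT]
      have h2 : w' s(x, cp x) = 2 := by rw [Ecp x (Or.inr hxT), if_neg hxS]
      have h3 : w s(x, v) = 2 := by
        rw [Sym2.eq_swap]
        exact hw.rr2 v x (hBadj x hxB) hvI (hBI x hxB) (Or.inl hvP)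
      have h4 := hcpT x hxT
      omega
  have SumAllP : ∀ z ∈ P, wdeg G w' z = wdeg G w z := by
    intro z hz
    by_cases hzS : z ∈ S
    · exact SumS z hzS
    · by_cases hzT : z ∈ T
      · exact SumT z hzT
      · rw [wdeg_nbr, wdeg_nbr]
        refine Finset.sum_congr rfl (fun y hy => ?_)
        exact Erest z y ((SimpleGraph.mem_neighborFinset _ _ _).mp hy) hz
          (fun h => absurd h (not_or.mpr ⟨hzS, hzT⟩))
  -- the degree sum of v equals t
  have hTBS : T ⊆ B \ S := fun x hx =>
    Finset.mem_sdiff.mpr ⟨hTB hx, fun h => hSTdisj x h hx⟩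
  have SumV : wdeg G w' v = t := by
    have hNsum : wdeg G w' v = (∑ x ∈ K, w' s(v, x)) +
        ((∑ x ∈ B, w' s(v, x)) + (∑ x ∈ Fd, w' s(v, x))) := by
      rw [wdeg_nbr, ← hN, hsplit1 (fun x => w' s(v, x)), hsplit2 (fun x => w' s(v, x))]
    have eqK : ∑ x ∈ K, w' s(v, x) = 2 * Kc.card + (K.card - Kc.card) := by
      rw [← Finset.sum_sdiff hKcK]
      have ev1 : ∀ x ∈ Kc, w' s(v, x) = 2 := fun x hx => by
        rw [EvK x (hKcK hx), if_pos hx]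
      have ev2 : ∀ x ∈ K \ Kc, w' s(v, x) = 1 := fun x hx => by
        rw [EvK x (Finset.mem_sdiff.mp hx).1, if_neg (Finset.mem_sdiff.mp hx).2]
      rw [Finset.sum_congr rfl ev1, Finset.sum_congr rfl ev2,
        Finset.sum_const, Finset.sum_const, smul_eq_mul, smul_eq_mul,
        Finset.card_sdiff_of_subset hKcK]
      omega
    have eqB : ∑ x ∈ B, w' s(v, x) =
        3 * S.card + T.card + 2 * (B.card - S.card - T.card) := by
      rw [← Finset.sum_sdiff hSB, ← Finset.sum_sdiff hTBS]
      have ev1 : ∀ x ∈ S, w' s(v, x) = 3 := fun x hx => by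
        rw [EvB x (hSB hx), if_pos hx]
      have ev2 : ∀ x ∈ T, w' s(v, x) = 1 := fun x hx => by
        rw [EvB x (hTB hx), if_neg (fun h => hSTdisj x h hx), if_pos hx]
      have ev3 : ∀ x ∈ (B \ S) \ T, w' s(v, x) = 2 := by
        intro x hx
        have hx1 := Finset.mem_sdiff.mp hx
        have hx2 := Finset.mem_sdiff.mp hx1.1
        rw [EvB x hx2.1, if_neg hx2.2, if_neg hx1.2]
        exact hw.rr2 v x (hBadj x hx2.1) hvI (hBI x hx2.1) (Or.inl hvP)
      rw [Finset.sum_congr rfl ev1, Finset.sum_congr rfl ev2, Finset.sum_congr rfl ev3,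
        Finset.sum_const, Finset.sum_const, Finset.sum_const, smul_eq_mul, smul_eq_mul,
        smul_eq_mul, Finset.card_sdiff_of_subset hTBS, Finset.card_sdiff_of_subset hSB]
      have hTle : T.card ≤ (B \ S).card := Finset.card_le_card hTBS
      have hSle : S.card ≤ B.card := Finset.card_le_card hSB
      rw [Finset.card_sdiff_of_subset hSB] at hTle
      omega
    have eqF : ∑ x ∈ Fd, w' s(v, x) = 2 * Fd.card := by
      have ev : ∀ x ∈ Fd, w' s(v, x) = 2 := by
        intro x hx
        rw [EvFd x hx]
        obtain ⟨hadj, hxI, hxP⟩ := (hFdmem x).mp hx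
        exact hw.rr2 v x hadj hvI hxI (Or.inr hxP)
      rw [Finset.sum_congr rfl ev, Finset.sum_const, smul_eq_mul]
      omega
    have hSle : S.card ≤ B.card := Finset.card_le_card hSB
    have hTle : T.card ≤ B.card - S.card := by
      have := Finset.card_le_card hTBS
      rwa [Finset.card_sdiff_of_subset hSB] at this
    have hKcle : Kc.card ≤ K.card := Finset.card_le_card hKcK
    rw [hNsum, eqK, eqB, eqF]
    omega
  -- assemble the invariant
  refine ⟨w', ?_, ?_, ?_, ?_, ?_⟩
  · -- iw
    intro a b hadj haI
    simp only [hw'def]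
    split_ifs with h1 h2 h3 h4 h5 h6
    · exfalso
      obtain ⟨x, hx, he⟩ := h1
      rcases Sym2.eq_iff.mp he with ⟨h1', h2'⟩ | ⟨h1', h2'⟩
      · exact hvI (h1' ▸ haI)
      · exact hBI x (hSB hx) (h1' ▸ haI)
    · exfalso
      obtain ⟨x, hx, he⟩ := h2
      rcases Sym2.eq_iff.mp he with ⟨h1', h2'⟩ | ⟨h1', h2'⟩
      · exact hvI (h1' ▸ haI)
      · exact hBI x (hTB hx) (h1' ▸ haI)
    · exact Or.inl rfl
    · exact Or.inr rfl
    · exact Or.inr rfl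
    · exact Or.inl rfl
    · exact hw.iw a b hadj haI
  · -- rr
    intro a b hadj
    simp only [hw'def]
    split_ifs
    · exact Or.inr (Or.inr rfl)
    · exact Or.inl rfl
    · exact Or.inl rfl
    · exact Or.inr (Or.inl rfl)
    · exact Or.inr (Or.inl rfl)
    · exact Or.inl rfl
    · exact hw.rr a b hadj
  · -- rr2
    intro a b hadj haI hbI hab
    have hout : (a ≠ v ∧ a ∉ P) ∨ (b ≠ v ∧ b ∉ P) := by
      rcases hab with h | h
      · exact Or.inl ⟨fun he => h (he ▸ Finset.mem_insert_self v P),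
          fun hp => h (Finset.mem_insert_of_mem hp)⟩
      · exact Or.inr ⟨fun he => h (he ▸ Finset.mem_insert_self v P),
          fun hp => h (Finset.mem_insert_of_mem hp)⟩
    simp only [hw'def]
    have hc1 : ¬ ∃ x ∈ S, s(a, b) = s(v, x) := by
      rintro ⟨x, hx, he⟩
      have hxB := hSB hx
      rcases Sym2.eq_iff.mp he with ⟨h1', h2'⟩ | ⟨h1', h2'⟩
      · rcases hout with ⟨hav, _⟩ | ⟨_, hbP⟩
        · exact hav h1'
        · exact hbP (h2' ▸ hBP x hxB)
      · rcases hout with ⟨_, haP⟩ | ⟨hbv, _⟩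
        · exact haP (h1' ▸ hBP x hxB)
        · exact hbv h2'
    have hc2 : ¬ ∃ x ∈ T, s(a, b) = s(v, x) := by
      rintro ⟨x, hx, he⟩
      have hxB := hTB hx
      rcases Sym2.eq_iff.mp he with ⟨h1', h2'⟩ | ⟨h1', h2'⟩
      · rcases hout with ⟨hav, _⟩ | ⟨_, hbP⟩
        · exact hav h1'
        · exact hbP (h2' ▸ hBP x hxB)
      · rcases hout with ⟨_, haP⟩ | ⟨hbv, _⟩
        · exact haP (h1' ▸ hBP x hxB)
        · exact hbv h2'
    have hc3 : ¬ ∃ x ∈ S, s(a, b) = s(x, cp x) := by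
      rintro ⟨x, hx, he⟩
      rcases Sym2.eq_iff.mp he with ⟨h1', h2'⟩ | ⟨h1', h2'⟩
      · exact hbI (h2' ▸ hcpI x (hSB hx))
      · exact haI (h1' ▸ hcpI x (hSB hx))
    have hc4 : ¬ ∃ x ∈ T, s(a, b) = s(x, cp x) := by
      rintro ⟨x, hx, he⟩
      rcases Sym2.eq_iff.mp he with ⟨h1', h2'⟩ | ⟨h1', h2'⟩
      · exact hbI (h2' ▸ hcpI x (hTB hx))
      · exact haI (h1' ▸ hcpI x (hTB hx))
    have hc5 : ¬ ∃ u ∈ Kc, s(a, b) = s(v, u) := by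
      rintro ⟨u, hu, he⟩
      rcases Sym2.eq_iff.mp he with ⟨h1', h2'⟩ | ⟨h1', h2'⟩
      · exact hbI (h2' ▸ hKI u (hKcK hu))
      · exact haI (h1' ▸ hKI u (hKcK hu))
    have hc6 : ¬ ∃ u ∈ K \ Kc, s(a, b) = s(v, u) := by
      rintro ⟨u, hu, he⟩
      rcases Sym2.eq_iff.mp he with ⟨h1', h2'⟩ | ⟨h1', h2'⟩
      · exact hbI (h2' ▸ hKI u (Finset.mem_sdiff.mp hu).1)
      · exact haI (h1' ▸ hKI u (Finset.mem_sdiff.mp hu).1)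
    rw [if_neg hc1, if_neg hc2, if_neg hc3, if_neg hc4, if_neg hc5, if_neg hc6]
    refine hw.rr2 a b hadj haI hbI ?_
    rcases hout with ⟨_, h⟩ | ⟨_, h⟩
    · exact Or.inl h
    · exact Or.inr h
  · -- big
    intro z hz
    rcases Finset.mem_insert.mp hz with rfl | hz'
    · rw [SumV]; exact htreal
    · rw [SumAllP z hz']; exact hw.big z hz'
  · -- dis
    intro z hz z' hz' hadj
    rcases Finset.mem_insert.mp hz with rfl | hz1
    · rcases Finset.mem_insert.mp hz' with rfl | hz2
      · exact absurd hadj (G.loopless.irrefl _)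
      · have hz'B : z' ∈ B := (hBmem z').mpr ⟨hadj, hP z' hz2, hz2⟩
        rw [SumV, SumAllP z' hz2]
        intro heq
        exact htFbd (by rw [heq]; exact Finset.mem_image.mpr ⟨z', hz'B, rfl⟩)
    · rcases Finset.mem_insert.mp hz' with rfl | hz2
      · have hzB : z ∈ B := (hBmem z).mpr ⟨hadj.symm, hP z hz1, hz1⟩
        rw [SumV, SumAllP z hz1]
        intro heq
        exact htFbd (by rw [← heq]; exact Finset.mem_image.mpr ⟨z, hzB, rfl⟩)
      · rw [SumAllP z hz1, SumAllP z' hz2]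
        exact hw.dis z hz1 z' hz2 hadj





lemma base (G : SimpleGraph V) (I : Set V) (α : ℝ) :
    Inv G I α (∅ : Finset V) (fun _ => 2) := by
  refine ⟨fun a b _ _ => Or.inr rfl, fun a b _ => Or.inr (Or.inl rfl),
    fun a b _ _ _ _ => rfl, fun v hv => absurd hv (Finset.notMem_empty v),
    fun v hv => absurd hv (Finset.notMem_empty v)⟩

lemma build (G : SimpleGraph V) (I : Set V) (α : ℝ)
    (hα : 1 ≤ α)
    (hmax : ∀ v ∉ I, ∃ u ∈ I, G.Adj v u)
    (h2 : ∀ v ∉ I, α + (((G.neighborSet v ∩ Iᶜ).ncard : ℝ) + 1) / 2 ≤ (deg G v : ℝ)) :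
    ∀ P : Finset V, (∀ x ∈ P, x ∉ I) → ∃ w, Inv G I α P w := by
  classical
  intro P
  induction P using Finset.strongInduction with
  | _ P ih =>
    intro hP
    rcases P.eq_empty_or_nonempty with rfl | ⟨v, hv⟩
    · exact ⟨fun _ => 2, base G I α⟩
    · have hsub : P.erase v ⊂ P := Finset.erase_ssubset hv
      obtain ⟨w, hw⟩ := ih (P.erase v) hsub (fun x hx => hP x (Finset.mem_of_mem_erase hx))
      obtain ⟨w', hw'⟩ := step G I α hα hmax h2 (P.erase v)
        (fun x hx => hP x (Finset.mem_of_mem_erase hx)) v (hP v hv)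
        (Finset.notMem_erase v P) w hw
      rw [Finset.insert_erase hv] at hw'
      exact ⟨w', hw'⟩

end Stmt11Aux

/-- Maximal-independent-set sufficient condition for the 1–2–3 Conjecture. -/
theorem stmt_11 {V : Type*} [Fintype V] (G : SimpleGraph V) (I : Set V) (α : ℝ)
    (hα : 1 ≤ α)
    (hind : ∀ u ∈ I, ∀ v ∈ I, ¬ G.Adj u v)
    (hmax : ∀ v ∉ I, ∃ u ∈ I, G.Adj v u)
    (h1 : ∀ v ∈ I, (deg G v : ℝ) ≤ α)
    (h2 : ∀ v ∉ I, α + (((G.neighborSet v ∩ Iᶜ).ncard : ℝ) + 1) / 2 ≤ (deg G v : ℝ)) :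
    Fulfills123 G := by
  classical
  obtain ⟨w, hw⟩ := Stmt11Aux.build G I α hα hmax h2
    (Finset.univ.filter (fun x => x ∉ I)) (fun x hx => (Finset.mem_filter.mp hx).2)
  have hmemP : ∀ x, x ∉ I → x ∈ Finset.univ.filter (fun x : V => x ∉ I) :=
    fun x hx => Finset.mem_filter.mpr ⟨Finset.mem_univ x, hx⟩
  have hIR : ∀ u x, G.Adj u x → u ∈ I → x ∉ I → wdeg G w u ≠ wdeg G w x := by
    intro u x hadj huI hxI
    have hbig := hw.big x (hmemP x hxI)
    have hle1 : wdeg G w u ≤ 2 * (G.neighborFinset u).card := by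
      rw [Stmt11Aux.wdeg_nbr]
      calc ∑ y ∈ G.neighborFinset u, w s(u, y) ≤ ∑ _y ∈ G.neighborFinset u, 2 := by
            refine Finset.sum_le_sum (fun y hy => ?_)
            rcases hw.iw u y ((SimpleGraph.mem_neighborFinset _ _ _).mp hy) huI with h | h <;>
              omega
        _ = 2 * (G.neighborFinset u).card := by
            rw [Finset.sum_const, smul_eq_mul, mul_comm]
    have hle2 : ((G.neighborFinset u).card : ℝ) ≤ α := by
      rw [← Stmt11Aux.deg_nbr]; exact h1 u huI
    have hlt : (wdeg G w u : ℝ) < (wdeg G w x : ℝ) := by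
      calc (wdeg G w u : ℝ) ≤ 2 * ((G.neighborFinset u).card : ℝ) := by exact_mod_cast hle1
        _ ≤ 2 * α := by linarith
        _ < (wdeg G w x : ℝ) := hbig
    intro heq
    rw [heq] at hlt
    exact lt_irrefl _ hlt
  refine ⟨w, ?_, ?_⟩
  · intro e he
    induction e with
    | h a b => exact hw.rr a b ((SimpleGraph.mem_edgeSet G).mp he)
  · intro u x hadj
    by_cases huI : u ∈ I
    · by_cases hxI : x ∈ I
      · exact absurd hadj (hind u huI x hxI)
      · exact hIR u x hadj huI hxI
    · by_cases hxI : x ∈ I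
      · exact (hIR x u hadj.symm hxI huI).symm
      · exact hw.dis u (hmemP u huI) x (hmemP x hxI) hadj
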